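/- Consider random processes where X^*_{t+1} = f^*ₜ(X^*ₜ, 𝐔ₜ, N⁰ₜ) and, for i = 1,…,n, Xⁱ_{t+1} = fⁱₜ(Xⁱₜ, X^*ₜ, 𝐔ₜ, Nⁱₜ), with {N⁰ₜ}, …, {Nⁿₜ} mutually independent i.i.d. noise processes independent of the initial state, and suppose each controller's action satisfies Uⁱₜ = gⁱₜ(Xⁱₜ, X^*_{1:t}, 𝐔_{1:t-1}) and the initial local states X¹₁, …, Xⁿ₁ are mutually independent given X^*₁. Then for every t, the local states X¹ₜ, …, Xⁿₜ are conditionally independent given (X^*_{1:t}, 𝐔_{1:t-1}): P(X¹ₜ = x¹, …, Xⁿₜ = xⁿ | X^*_{1:t}, 𝐔_{1:t-1}) = ∏ᵢ P(Xⁱₜ = xⁱ | X^*_{1:t}, 𝐔_{1:t-1}). -/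
import Mathlib


open Finset

open Classical in
/-- Probability of an event under a pmf on a finite sample space. -/
noncomputable def prOf {Ω : Type} [Fintype Ω] (p : Ω → ℝ) (A : Ω → Prop) : ℝ :=
  ∑ ω, if A ω then p ω else 0

lemma prOf_congr {Ω : Type} [Fintype Ω] (p : Ω → ℝ) {A B : Ω → Prop}
    (h : ∀ ω, A ω ↔ B ω) : prOf p A = prOf p B := by
  unfold prOf
  refine Finset.sum_congr rfl fun ω _ => ?_
  by_cases hA : A ω
  · simp [hA, (h ω).mp hA]
  · rw [if_neg hA, if_neg (fun hB => hA ((h ω).mpr hB))]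

lemma prOf_nonneg {Ω : Type} [Fintype Ω] {p : Ω → ℝ} (hp : ∀ ω, 0 ≤ p ω)
    (A : Ω → Prop) : 0 ≤ prOf p A := by
  unfold prOf
  exact Finset.sum_nonneg fun ω _ => by split <;> simp [hp ω]

lemma prOf_mono {Ω : Type} [Fintype Ω] {p : Ω → ℝ} (hp : ∀ ω, 0 ≤ p ω)
    {A B : Ω → Prop} (h : ∀ ω, A ω → B ω) : prOf p A ≤ prOf p B := by
  unfold prOf
  apply Finset.sum_le_sum
  intro ω _
  classical
  by_cases hA : A ω
  · simp [hA, h ω hA]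
  · simp only [hA, if_false]
    split <;> simp [hp ω]

open Classical in
lemma prOf_comp {Ω α : Type} [Fintype Ω] [Fintype α] (p : Ω → ℝ) (V : Ω → α)
    (B : α → Prop) :
    prOf p (fun ω => B (V ω)) = ∑ v, if B v then prOf p (fun ω => V ω = v) else 0 := by
  classical
  have key : ∀ v : α, (if B v then prOf p (fun ω => V ω = v) else 0)
      = ∑ ω, if B v ∧ V ω = v then p ω else 0 := by
    intro v
    by_cases h : B v
    · simp only [h, if_true, prOf]
      exact Finset.sum_congr rfl fun ω _ => by simp [h]
    · simp [h]
  rw [Finset.sum_congr rfl fun v _ => key v, Finset.sum_comm]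
  unfold prOf
  refine Finset.sum_congr rfl fun ω _ => ?_
  rw [Finset.sum_eq_single (V ω)]
  · simp
  · intro v _ hv
    exact if_neg (fun hh => hv hh.2.symm)
  · simp

open Classical in
lemma prod_ite_one {n : ℕ} (Q : Fin n → Prop) (w : Fin n → ℝ) :
    (∏ i, (if Q i then (1:ℝ) else 0) * w i) = if (∀ i, Q i) then ∏ i, w i else 0 := by
  classical
  by_cases h : ∀ i, Q i
  · simp [h]
  · push_neg at h
    obtain ⟨i0, hi0⟩ := h
    rw [if_neg (fun hh => hi0 (hh i0))]
    exact Finset.prod_eq_zero (Finset.mem_univ i0) (by simp [hi0])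

lemma iteCongr {α : Sort*} {c d : Prop} {i1 : Decidable c} {i2 : Decidable d}
    (h : c = d) (x y : α) : @ite α c i1 x y = @ite α d i2 x y := by
  subst h
  exact congrArg (fun j => @ite α c j x y) (Subsingleton.elim i1 i2)

open Classical in
lemma master_formula {Ω : Type} [Fintype Ω] {n : ℕ} {𝒳s 𝒩0 : Type}
    {𝒳 : Fin n → Type} {𝒩 : Fin n → Type}
    [Fintype 𝒳s] [∀ i, Fintype (𝒳 i)] [Fintype 𝒩0] [∀ i, Fintype (𝒩 i)]
    (p : Ω → ℝ)
    (Xs0 : Ω → 𝒳s) (Xl0 : (i : Fin n) → Ω → 𝒳 i)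
    (N0 : ℕ → Ω → 𝒩0) (N : (i : Fin n) → ℕ → Ω → 𝒩 i)
    (T : ℕ) (xs0 : 𝒳s) (q0 : ℝ) (r : (i : Fin n) → 𝒳 i → ℝ)
    (hindep : ∀ (xs : 𝒳s) (b : ∀ i, 𝒳 i) (c : Fin T → 𝒩0) (d : ∀ i, Fin T → 𝒩 i),
      prOf p (fun ω => Xs0 ω = xs ∧ (∀ i, Xl0 i ω = b i) ∧
          (∀ τ : Fin T, N0 τ.1 ω = c τ) ∧ ∀ i, ∀ τ : Fin T, N i τ.1 ω = d i τ) =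
        prOf p (fun ω => Xs0 ω = xs ∧ ∀ i, Xl0 i ω = b i) *
          (∏ τ : Fin T, prOf p (fun ω => N0 τ.1 ω = c τ)) *
          ∏ i, ∏ τ : Fin T, prOf p (fun ω => N i τ.1 ω = d i τ))
    (hjoint : ∀ b : ∀ i, 𝒳 i,
      prOf p (fun ω => Xs0 ω = xs0 ∧ ∀ i, Xl0 i ω = b i) = q0 * ∏ i, r i (b i))
    (B0 : (Fin T → 𝒩0) → Prop) (B : (i : Fin n) → 𝒳 i → (Fin T → 𝒩 i) → Prop) :
    prOf p (fun ω => Xs0 ω = xs0 ∧ B0 (fun τ => N0 τ.1 ω) ∧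
        ∀ i, B i (Xl0 i ω) (fun τ => N i τ.1 ω)) =
      (q0 * ∑ c : Fin T → 𝒩0, if B0 c then ∏ τ, prOf p (fun ω => N0 τ.1 ω = c τ) else 0) *
        ∏ i, ∑ a : 𝒳 i, ∑ nf : Fin T → 𝒩 i,
          if B i a nf then r i a * ∏ τ, prOf p (fun ω => N i τ.1 ω = nf τ) else 0 := by
  classical
  have h0 := prOf_comp p
      (fun ω => (Xs0 ω, fun i => Xl0 i ω, fun τ : Fin T => N0 τ.1 ω,
        fun i (τ : Fin T) => N i τ.1 ω))
      (fun v => v.1 = xs0 ∧ B0 v.2.2.1 ∧ ∀ i, B i (v.2.1 i) (v.2.2.2 i))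
  rw [h0]
  refine Eq.trans (b := ∑ a : 𝒳s, ∑ b : ∀ i, 𝒳 i, ∑ c : Fin T → 𝒩0,
      ∑ d : ∀ i, Fin T → 𝒩 i,
      if a = xs0 ∧ B0 c ∧ ∀ i, B i (b i) (d i) then
        prOf p (fun ω =>
          (Xs0 ω, fun i => Xl0 i ω, fun τ : Fin T => N0 τ.1 ω,
            fun i (τ : Fin T) => N i τ.1 ω) = (a, b, c, d)) else 0) ?_ ?_
  · rw [Fintype.sum_prod_type]
    refine Finset.sum_congr rfl fun a _ => ?_
    rw [Fintype.sum_prod_type]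
    refine Finset.sum_congr rfl fun b _ => ?_
    rw [Fintype.sum_prod_type]
    refine Finset.sum_congr rfl fun c _ => ?_
    refine Finset.sum_congr rfl fun d _ => ?_
    exact iteCongr rfl _ _
  -- pointwise rewrite of the point probability
  have h2 : ∀ (a : 𝒳s) (b : ∀ i, 𝒳 i) (c : Fin T → 𝒩0) (d : ∀ i, Fin T → 𝒩 i),
      prOf p (fun ω =>
          (Xs0 ω, fun i => Xl0 i ω, fun τ : Fin T => N0 τ.1 ω,
            fun i (τ : Fin T) => N i τ.1 ω) = (a, b, c, d)) =
        prOf p (fun ω => Xs0 ω = a ∧ ∀ i, Xl0 i ω = b i) *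
          (∏ τ : Fin T, prOf p (fun ω => N0 τ.1 ω = c τ)) *
          ∏ i, ∏ τ : Fin T, prOf p (fun ω => N i τ.1 ω = d i τ) := by
    intro a b c d
    rw [← hindep a b c d]
    refine prOf_congr p fun ω => ?_
    simp only [Prod.mk.injEq, funext_iff]
  set K0 : (Fin T → 𝒩0) → ℝ :=
    fun c => if B0 c then ∏ τ, prOf p (fun ω => N0 τ.1 ω = c τ) else 0 with hK0
  set K : (i : Fin n) → 𝒳 i → (Fin T → 𝒩 i) → ℝ :=
    fun i a nf => if B i a nf then
      r i a * ∏ τ, prOf p (fun ω => N i τ.1 ω = nf τ) else 0 with hK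
  have h3 : ∀ a : 𝒳s,
      (∑ b : ∀ i, 𝒳 i, ∑ c : Fin T → 𝒩0, ∑ d : ∀ i, Fin T → 𝒩 i,
        if a = xs0 ∧ B0 c ∧ ∀ i, B i (b i) (d i) then
          prOf p (fun ω =>
            (Xs0 ω, fun i => Xl0 i ω, fun τ : Fin T => N0 τ.1 ω,
              fun i (τ : Fin T) => N i τ.1 ω) = (a, b, c, d)) else 0) =
      if a = xs0 then
        ∑ b : ∀ i, 𝒳 i, ∑ c : Fin T → 𝒩0, ∑ d : ∀ i, Fin T → 𝒩 i,
          q0 * K0 c * ∏ i, K i (b i) (d i)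
      else 0 := by
    intro a
    by_cases ha : a = xs0
    · rw [if_pos ha]
      subst ha
      refine Finset.sum_congr rfl fun b _ => ?_
      refine Finset.sum_congr rfl fun c _ => ?_
      refine Finset.sum_congr rfl fun d _ => ?_
      rw [h2 a b c d, hjoint b]
      by_cases hc : B0 c
      · by_cases hq : ∀ i, B i (b i) (d i)
        · rw [if_pos (⟨rfl, hc, hq⟩ : a = a ∧ B0 c ∧ ∀ i, B i (b i) (d i)), hK0]
          simp only [if_pos hc]
          have hKK : (∏ i, K i (b i) (d i)) =
              ∏ i, r i (b i) * ∏ τ, prOf p (fun ω => N i τ.1 ω = d i τ) := by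
            refine Finset.prod_congr rfl fun i _ => ?_
            rw [hK]; simp only [if_pos (hq i)]
          rw [hKK, Finset.prod_mul_distrib]
          ring
        · rw [if_neg (fun hh => hq hh.2.2)]
          obtain ⟨i0, hi0⟩ := not_forall.mp hq
          have hz : K i0 (b i0) (d i0) = 0 := by rw [hK]; simp [hi0]
          rw [Finset.prod_eq_zero (Finset.mem_univ i0) hz]
          ring
      · rw [if_neg (fun hh => hc hh.2.1), hK0]
        simp only [if_neg hc]
        ring
    · rw [if_neg ha]
      refine Finset.sum_eq_zero fun b _ => Finset.sum_eq_zero fun c _ =>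
        Finset.sum_eq_zero fun d _ => ?_
      rw [if_neg (fun hh => ha hh.1)]
  refine Eq.trans (Finset.sum_congr rfl fun a _ => h3 a) ?_
  calc (∑ a : 𝒳s, if a = xs0 then
          ∑ b : ∀ i, 𝒳 i, ∑ c : Fin T → 𝒩0, ∑ d : ∀ i, Fin T → 𝒩 i,
            q0 * K0 c * ∏ i, K i (b i) (d i) else 0)
      = ∑ b : ∀ i, 𝒳 i, ∑ c : Fin T → 𝒩0, ∑ d : ∀ i, Fin T → 𝒩 i,
          q0 * K0 c * ∏ i, K i (b i) (d i) := by
        rw [Finset.sum_ite_eq' Finset.univ xs0]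
        simp
    _ = (q0 * ∑ c, K0 c) * ∏ i, ∑ a : 𝒳 i, ∑ nf : Fin T → 𝒩 i, K i a nf := by
        have hbd : (∏ i, ∑ a : 𝒳 i, ∑ nf : Fin T → 𝒩 i, K i a nf)
            = ∑ b : ∀ i, 𝒳 i, ∑ d : ∀ i, Fin T → 𝒩 i, ∏ i, K i (b i) (d i) := by
          rw [Finset.prod_univ_sum, Fintype.piFinset_univ]
          refine Finset.sum_congr rfl fun b _ => ?_
          rw [Finset.prod_univ_sum, Fintype.piFinset_univ]
        have h4 : (∑ c, K0 c) * (∑ b : ∀ i, 𝒳 i, ∑ d : ∀ i, Fin T → 𝒩 i,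
              ∏ i, K i (b i) (d i))
            = ∑ c, ∑ b : ∀ i, 𝒳 i, ∑ d : ∀ i, Fin T → 𝒩 i,
              K0 c * ∏ i, K i (b i) (d i) := by
          rw [Finset.sum_mul_sum]
          exact Finset.sum_congr rfl fun c _ => Finset.sum_congr rfl fun b _ =>
            Finset.mul_sum _ _ _
        rw [hbd, mul_assoc, h4, Finset.mul_sum, Finset.sum_comm]
        refine Finset.sum_congr rfl fun c _ => ?_
        rw [Finset.mul_sum]
        refine Finset.sum_congr rfl fun b _ => ?_
        rw [Finset.mul_sum]
        refine Finset.sum_congr rfl fun d _ => ?_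
        ring

def PhiAux {n : ℕ} {𝒳s : Type} {𝒳 𝒰 𝒩 : Fin n → Type}
    (fl : (i : Fin n) → ℕ → 𝒳 i → 𝒳s → (∀ i, 𝒰 i) → 𝒩 i → 𝒳 i)
    (xsE : ℕ → 𝒳s) (uE : ℕ → ∀ j, 𝒰 j) (i : Fin n) :
    ℕ → 𝒳 i → (ℕ → 𝒩 i) → 𝒳 i
  | 0, a, _ => a
  | (τ+1), a, nf => fl i τ (PhiAux fl xsE uE i τ a nf) (xsE τ) (uE τ) (nf τ)

lemma PhiAux_congr {n : ℕ} {𝒳s : Type} {𝒳 𝒰 𝒩 : Fin n → Type}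
    (fl : (i : Fin n) → ℕ → 𝒳 i → 𝒳s → (∀ i, 𝒰 i) → 𝒩 i → 𝒳 i)
    (xsE : ℕ → 𝒳s) (uE : ℕ → ∀ j, 𝒰 j) (i : Fin n) (τ : ℕ) (a : 𝒳 i)
    {nf nf' : ℕ → 𝒩 i} (h : ∀ σ, σ < τ → nf σ = nf' σ) :
    PhiAux fl xsE uE i τ a nf = PhiAux fl xsE uE i τ a nf' := by
  induction τ with
  | zero => rfl
  | succ τ ih =>
    simp only [PhiAux]
    rw [ih (fun σ hσ => h σ (by omega)), h τ (by omega)]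

set_option maxHeartbeats 2000000 in
/-- conditional independence in coupled subsystems with control
sharing: with global state dynamics X*_{t+1} = f*ₜ(X*ₜ,𝐔ₜ,N⁰ₜ), local dynamics
Xⁱ_{t+1} = fⁱₜ(Xⁱₜ,X*ₜ,𝐔ₜ,Nⁱₜ), mutually independent noise processes independent of
the initial states, actions Uⁱₜ = gⁱₜ(Xⁱₜ, X*_{1:t}, 𝐔_{1:t-1}), and initial local
states conditionally independent given X*₁, the local states X¹ₜ,…,Xⁿₜ are
conditionally independent given (X*_{1:t}, 𝐔_{1:t-1}) at every time t. -/
theorem coupled_subsystems_conditional_independence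
    (Ω : Type) [Fintype Ω] (n : ℕ)
    (𝒳s 𝒩0 : Type) (𝒳 𝒰 𝒩 : Fin n → Type)
    [Fintype 𝒳s] [∀ i, Fintype (𝒳 i)] [∀ i, Fintype (𝒰 i)]
    [Fintype 𝒩0] [∀ i, Fintype (𝒩 i)]
    (p : Ω → ℝ) (hp : ∀ ω, 0 ≤ p ω) (hp1 : ∑ ω, p ω = 1)
    (Xs : ℕ → Ω → 𝒳s) (Xl : (i : Fin n) → ℕ → Ω → 𝒳 i)
    (U : (i : Fin n) → ℕ → Ω → 𝒰 i)
    (N0 : ℕ → Ω → 𝒩0) (N : (i : Fin n) → ℕ → Ω → 𝒩 i)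
    (fs : ℕ → 𝒳s → (∀ i, 𝒰 i) → 𝒩0 → 𝒳s)
    (fl : (i : Fin n) → ℕ → 𝒳 i → 𝒳s → (∀ i, 𝒰 i) → 𝒩 i → 𝒳 i)
    (g : (i : Fin n) → (t : ℕ) → 𝒳 i → (Fin (t + 1) → 𝒳s) →
      (Fin t → ∀ j, 𝒰 j) → 𝒰 i)
    (hXs : ∀ t ω, Xs (t + 1) ω = fs t (Xs t ω) (fun i => U i t ω) (N0 t ω))
    (hXl : ∀ i t ω, Xl i (t + 1) ω =
      fl i t (Xl i t ω) (Xs t ω) (fun j => U j t ω) (N i t ω))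
    (hU : ∀ i t ω, U i t ω = g i t (Xl i t ω) (fun τ : Fin (t + 1) => Xs τ.1 ω)
      (fun τ : Fin t => fun j => U j τ.1 ω))
    (hindep : ∀ (T' : ℕ) (xs : 𝒳s) (x : ∀ i, 𝒳 i)
        (n0 : Fin T' → 𝒩0) (nv : ∀ i, Fin T' → 𝒩 i),
      prOf p (fun ω => Xs 0 ω = xs ∧ (∀ i, Xl i 0 ω = x i) ∧
          (∀ τ : Fin T', N0 τ.1 ω = n0 τ) ∧ ∀ i, ∀ τ : Fin T', N i τ.1 ω = nv i τ) =
        prOf p (fun ω => Xs 0 ω = xs ∧ ∀ i, Xl i 0 ω = x i) *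
          (∏ τ : Fin T', prOf p (fun ω => N0 τ.1 ω = n0 τ)) *
          ∏ i, ∏ τ : Fin T', prOf p (fun ω => N i τ.1 ω = nv i τ))
    (hinit : ∀ xs : 𝒳s, 0 < prOf p (fun ω => Xs 0 ω = xs) →
      ∀ x : ∀ i, 𝒳 i,
        prOf p (fun ω => (∀ i, Xl i 0 ω = x i) ∧ Xs 0 ω = xs) /
            prOf p (fun ω => Xs 0 ω = xs) =
          ∏ i, prOf p (fun ω => Xl i 0 ω = x i ∧ Xs 0 ω = xs) /
            prOf p (fun ω => Xs 0 ω = xs)) :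
    ∀ (t : ℕ) (xsv : Fin (t + 1) → 𝒳s) (uv : Fin t → ∀ j, 𝒰 j),
      0 < prOf p (fun ω => (∀ τ : Fin (t + 1), Xs τ.1 ω = xsv τ) ∧
          ∀ τ : Fin t, ∀ j, U j τ.1 ω = uv τ j) →
      ∀ x : ∀ i, 𝒳 i,
        prOf p (fun ω => (∀ i, Xl i t ω = x i) ∧
            (∀ τ : Fin (t + 1), Xs τ.1 ω = xsv τ) ∧
            ∀ τ : Fin t, ∀ j, U j τ.1 ω = uv τ j) /
          prOf p (fun ω => (∀ τ : Fin (t + 1), Xs τ.1 ω = xsv τ) ∧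
            ∀ τ : Fin t, ∀ j, U j τ.1 ω = uv τ j) =
        ∏ i, prOf p (fun ω => Xl i t ω = x i ∧
            (∀ τ : Fin (t + 1), Xs τ.1 ω = xsv τ) ∧
            ∀ τ : Fin t, ∀ j, U j τ.1 ω = uv τ j) /
          prOf p (fun ω => (∀ τ : Fin (t + 1), Xs τ.1 ω = xsv τ) ∧
            ∀ τ : Fin t, ∀ j, U j τ.1 ω = uv τ j) := by
  classical
  intro t xsv uv hpos x
  -- nonempty sample space
  have hne : Nonempty Ω := by
    by_contra h
    rw [not_nonempty_iff] at h
    rw [Finset.univ_eq_empty, Finset.sum_empty] at hp1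
    exact one_ne_zero hp1.symm
  obtain ⟨ω0⟩ := hne
  -- extensions of the history to all times
  set xsE : ℕ → 𝒳s := fun τ => if h : τ < t + 1 then xsv ⟨τ, h⟩ else Xs τ ω0 with hxsE
  set uE : ℕ → ∀ j, 𝒰 j := fun τ => if h : τ < t then uv ⟨τ, h⟩ else fun j => U j τ ω0
    with huE
  have hxsE_lt : ∀ (τ : ℕ) (h : τ < t + 1), xsE τ = xsv ⟨τ, h⟩ := by
    intro τ h; simp only [hxsE]; rw [dif_pos h]
  have huE_lt : ∀ (τ : ℕ) (h : τ < t), uE τ = uv ⟨τ, h⟩ := by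
    intro τ h; simp only [huE]; rw [dif_pos h]
  set Φ := PhiAux fl xsE uE with hΦ
  -- backward determinism
  have aux_back : ∀ ω, Xs 0 ω = xsE 0 →
      (∀ τ : Fin t, fs τ.1 (xsE τ.1) (uE τ.1) (N0 τ.1 ω) = xsE (τ.1+1)) →
      (∀ i, ∀ τ : Fin t, g i τ.1 (Φ i τ.1 (Xl i 0 ω) (fun σ => N i σ ω))
          (fun σ : Fin (τ.1+1) => xsE σ.1) (fun σ : Fin τ.1 => uE σ.1) = uv τ i) →
      ∀ τ, τ ≤ t → (Xs τ ω = xsE τ ∧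
        (∀ i, Xl i τ ω = Φ i τ (Xl i 0 ω) (fun σ => N i σ ω)) ∧
        ∀ _ : τ < t, ∀ j, U j τ ω = uE τ j) := by
    intro ω h0 hn0 hg τ
    induction τ using Nat.strong_induction_on with
    | _ τ IH =>
      intro hτ
      match τ, hτ, IH with
      | 0, hτ, IH =>
        refine ⟨h0, fun i => rfl, fun h j => ?_⟩
        rw [hU j 0 ω]
        have e1 : (fun σ : Fin (0+1) => Xs σ.1 ω) = (fun σ : Fin (0+1) => xsE σ.1) := by
          funext σ
          have hσ : σ.1 = 0 := by omega
          rw [hσ, h0]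
        have e2 : (fun σ : Fin 0 => fun j' => U j' σ.1 ω)
            = (fun σ : Fin 0 => uE σ.1) := by
          funext σ; exact σ.elim0
        rw [e1, e2, huE_lt 0 h]
        exact hg j ⟨0, h⟩
      | (σ+1), hτ, IH =>
        have hσt : σ < t := by omega
        obtain ⟨hXsσ, hXlσ, hUσ⟩ := IH σ (by omega) (by omega)
        have hUσ' : (fun j => U j σ ω) = uE σ := funext fun j => hUσ hσt j
        have hXs1 : Xs (σ+1) ω = xsE (σ+1) := by
          rw [hXs σ ω, hXsσ, hUσ']
          exact hn0 ⟨σ, hσt⟩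
        have hXl1 : ∀ i, Xl i (σ+1) ω = Φ i (σ+1) (Xl i 0 ω) (fun s => N i s ω) := by
          intro i
          rw [hXl i σ ω, hXlσ i, hXsσ, hUσ']
          rfl
        have hU1 : ∀ _ : σ+1 < t, ∀ j, U j (σ+1) ω = uE (σ+1) j := by
          intro h j
          rw [hU j (σ+1) ω]
          have e1 : (fun ρ : Fin (σ+1+1) => Xs ρ.1 ω)
              = (fun ρ : Fin (σ+1+1) => xsE ρ.1) := by
            funext ρ
            rcases Nat.lt_succ_iff_lt_or_eq.mp ρ.2 with hlt | heq
            · exact (IH ρ.1 hlt (by omega)).1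
            · rw [heq]; exact hXs1
          have e2 : (fun ρ : Fin (σ+1) => fun j' => U j' ρ.1 ω)
              = (fun ρ : Fin (σ+1) => uE ρ.1) := by
            funext ρ
            funext j'
            exact (IH ρ.1 (by omega) (by omega)).2.2 (by omega) j'
          rw [e1, e2, hXl1 j, huE_lt (σ+1) h]
          exact hg j ⟨σ+1, h⟩
        exact ⟨hXs1, hXl1, hU1⟩
  -- forward determinism
  have aux_fwd : ∀ ω, (∀ τ : Fin (t+1), Xs τ.1 ω = xsv τ) →
      (∀ τ : Fin t, ∀ j, U j τ.1 ω = uv τ j) →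
      ∀ τ, τ ≤ t → ∀ i, Xl i τ ω = Φ i τ (Xl i 0 ω) (fun σ => N i σ ω) := by
    intro ω hhs hhu τ
    induction τ with
    | zero => intro _ i; rfl
    | succ σ ih =>
      intro hτ i
      rw [hXl i σ ω, ih (by omega) i]
      have hXsσ : Xs σ ω = xsE σ := by
        rw [hxsE_lt σ (by omega)]; exact hhs ⟨σ, by omega⟩
      have hUσ : (fun j => U j σ ω) = uE σ := by
        funext j; rw [huE_lt σ (by omega)]; exact hhu ⟨σ, by omega⟩ j
      rw [hXsσ, hUσ]
      rfl
  have fwd_n0 : ∀ ω, (∀ τ : Fin (t+1), Xs τ.1 ω = xsv τ) →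
      (∀ τ : Fin t, ∀ j, U j τ.1 ω = uv τ j) →
      ∀ τ : Fin t, fs τ.1 (xsE τ.1) (uE τ.1) (N0 τ.1 ω) = xsE (τ.1+1) := by
    intro ω hhs hhu τ
    have hXsσ : Xs τ.1 ω = xsE τ.1 := by
      rw [hxsE_lt τ.1 (by omega)]; exact hhs ⟨τ.1, by omega⟩
    have hUσ : (fun j => U j τ.1 ω) = uE τ.1 := by
      funext j; rw [huE_lt τ.1 τ.2]; exact hhu ⟨τ.1, τ.2⟩ j
    rw [← hXsσ, ← hUσ, ← hXs τ.1 ω, hxsE_lt (τ.1+1) (by omega)]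
    exact hhs ⟨τ.1+1, by omega⟩
  have fwd_g : ∀ ω, (∀ τ : Fin (t+1), Xs τ.1 ω = xsv τ) →
      (∀ τ : Fin t, ∀ j, U j τ.1 ω = uv τ j) →
      ∀ i, ∀ τ : Fin t, g i τ.1 (Φ i τ.1 (Xl i 0 ω) (fun σ => N i σ ω))
        (fun σ : Fin (τ.1+1) => xsE σ.1) (fun σ : Fin τ.1 => uE σ.1) = uv τ i := by
    intro ω hhs hhu i τ
    have e0 : Φ i τ.1 (Xl i 0 ω) (fun σ => N i σ ω) = Xl i τ.1 ω :=
      (aux_fwd ω hhs hhu τ.1 (by omega) i).symm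
    have e1 : (fun σ : Fin (τ.1+1) => xsE σ.1) = (fun σ : Fin (τ.1+1) => Xs σ.1 ω) := by
      funext σ
      rw [hxsE_lt σ.1 (by omega)]
      exact (hhs ⟨σ.1, by omega⟩).symm
    have e2 : (fun σ : Fin τ.1 => uE σ.1)
        = (fun σ : Fin τ.1 => fun j => U j σ.1 ω) := by
      funext σ
      funext j
      rw [huE_lt σ.1 (by omega)]
      exact (hhu ⟨σ.1, by omega⟩ j).symm
    rw [e0, e1, e2, ← hU i τ.1 ω]
    exact hhu τ i
  -- primitive-event predicates
  set nExt : (i : Fin n) → (Fin t → 𝒩 i) → ℕ → 𝒩 i :=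
    fun i nf σ => if h : σ < t then nf ⟨σ, h⟩ else N i σ ω0 with hnExtdef
  have hnExt : ∀ (i : Fin n) ω (τ : ℕ), τ ≤ t → ∀ a : 𝒳 i,
      Φ i τ a (nExt i (fun σ : Fin t => N i σ.1 ω)) = Φ i τ a (fun σ => N i σ ω) := by
    intro i ω τ hτ a
    refine PhiAux_congr fl xsE uE i τ a fun σ hσ => ?_
    simp only [hnExtdef]
    rw [dif_pos (by omega)]
  set B0c : (Fin t → 𝒩0) → Prop :=
    fun c => ∀ τ : Fin t, fs τ.1 (xsE τ.1) (uE τ.1) (c τ) = xsE (τ.1+1) with hB0c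
  set Gc : (i : Fin n) → 𝒳 i → (Fin t → 𝒩 i) → Prop :=
    fun i a nf => ∀ τ : Fin t, g i τ.1 (Φ i τ.1 a (nExt i nf))
      (fun σ : Fin (τ.1+1) => xsE σ.1) (fun σ : Fin τ.1 => uE σ.1) = uv τ i with hGc
  set Fc : (i : Fin n) → 𝒳 i → (Fin t → 𝒩 i) → 𝒳 i :=
    fun i a nf => Φ i t a (nExt i nf) with hFc
  -- the key event identification
  have hiff : ∀ (S : (i : Fin n) → 𝒳 i → Prop) ω,
      ((∀ i, S i (Xl i t ω)) ∧ (∀ τ : Fin (t+1), Xs τ.1 ω = xsv τ) ∧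
        (∀ τ : Fin t, ∀ j, U j τ.1 ω = uv τ j)) ↔
      (Xs 0 ω = xsE 0 ∧ B0c (fun τ => N0 τ.1 ω) ∧
        ∀ i, (Gc i (Xl i 0 ω) (fun τ : Fin t => N i τ.1 ω) ∧
          S i (Fc i (Xl i 0 ω) (fun τ : Fin t => N i τ.1 ω)))) := by
    intro S ω
    constructor
    · rintro ⟨hS, hhs, hhu⟩
      refine ⟨?_, ?_, fun i => ⟨?_, ?_⟩⟩
      · rw [hxsE_lt 0 (by omega)]; exact hhs ⟨0, by omega⟩
      · intro τ; exact fwd_n0 ω hhs hhu τ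
      · intro τ
        rw [hnExt i ω τ.1 (by omega)]
        exact fwd_g ω hhs hhu i τ
      · show S i (Fc i (Xl i 0 ω) (fun τ : Fin t => N i τ.1 ω))
        rw [hFc]
        simp only
        rw [hnExt i ω t le_rfl, ← aux_fwd ω hhs hhu t le_rfl i]
        exact hS i
    · rintro ⟨h0, hn0, hic⟩
      have hgc : ∀ i, ∀ τ : Fin t, g i τ.1 (Φ i τ.1 (Xl i 0 ω) (fun σ => N i σ ω))
          (fun σ : Fin (τ.1+1) => xsE σ.1) (fun σ : Fin τ.1 => uE σ.1) = uv τ i := by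
        intro i τ
        rw [← hnExt i ω τ.1 (by omega)]
        exact (hic i).1 τ
      have hb := aux_back ω h0 hn0 hgc
      have hhs : ∀ τ : Fin (t+1), Xs τ.1 ω = xsv τ := by
        intro τ
        rw [(hb τ.1 (by omega)).1, hxsE_lt τ.1 τ.2]
      have hhu : ∀ τ : Fin t, ∀ j, U j τ.1 ω = uv τ j := by
        intro τ j
        rw [(hb τ.1 (by omega)).2.2 τ.2 j, huE_lt τ.1 τ.2]
      refine ⟨fun i => ?_, hhs, hhu⟩
      rw [(hb t le_rfl).2.1 i, ← hnExt i ω t le_rfl]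
      exact (hic i).2
  -- positivity of the initial-state probability
  have hq0pos : 0 < prOf p (fun ω => Xs 0 ω = xsE 0) := by
    refine lt_of_lt_of_le hpos (prOf_mono hp fun ω h => ?_)
    rw [hxsE_lt 0 (by omega)]
    exact h.1 ⟨0, by omega⟩
  set q0 : ℝ := prOf p (fun ω => Xs 0 ω = xsE 0) with hq0
  set rr : (i : Fin n) → 𝒳 i → ℝ :=
    fun i a => prOf p (fun ω => Xl i 0 ω = a ∧ Xs 0 ω = xsE 0) / q0 with hrr
  have hjoint : ∀ b : ∀ i, 𝒳 i,
      prOf p (fun ω => Xs 0 ω = xsE 0 ∧ ∀ i, Xl i 0 ω = b i) = q0 * ∏ i, rr i (b i) := by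
    intro b
    have h1 := hinit (xsE 0) hq0pos b
    have h2 : prOf p (fun ω => Xs 0 ω = xsE 0 ∧ ∀ i, Xl i 0 ω = b i)
        = prOf p (fun ω => (∀ i, Xl i 0 ω = b i) ∧ Xs 0 ω = xsE 0) :=
      prOf_congr p fun ω => and_comm
    rw [h2, ← hq0] at *
    rw [div_eq_iff (ne_of_gt hq0pos)] at h1
    rw [h1, hrr]
    ring
  -- master formula, parametrized by the final-state selection predicate
  have Hmaster : ∀ S : (i : Fin n) → 𝒳 i → Prop,
      prOf p (fun ω => Xs 0 ω = xsE 0 ∧ B0c (fun τ : Fin t => N0 τ.1 ω) ∧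
          ∀ i, (Gc i (Xl i 0 ω) (fun τ : Fin t => N i τ.1 ω) ∧
            S i (Fc i (Xl i 0 ω) (fun τ : Fin t => N i τ.1 ω)))) =
        (q0 * ∑ c : Fin t → 𝒩0, @ite ℝ (B0c c) (Classical.propDecidable _)
            (∏ τ, prOf p (fun ω => N0 τ.1 ω = c τ)) 0) *
          ∏ i, ∑ a : 𝒳 i, ∑ nf : Fin t → 𝒩 i,
            @ite ℝ (Gc i a nf ∧ S i (Fc i a nf)) (Classical.propDecidable _)
              (rr i a * ∏ τ, prOf p (fun ω => N i τ.1 ω = nf τ)) 0 := by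
    intro S
    exact master_formula p (Xs 0) (fun i => Xl i 0) N0 N t (xsE 0) q0 rr
      (hindep t) hjoint B0c (fun i a nf => Gc i a nf ∧ S i (Fc i a nf))
  set C : ℝ := q0 * ∑ c : Fin t → 𝒩0, @ite ℝ (B0c c) (Classical.propDecidable _)
      (∏ τ, prOf p (fun ω => N0 τ.1 ω = c τ)) 0 with hC
  set W : ((i : Fin n) → 𝒳 i → Prop) → (i : Fin n) → ℝ :=
    fun S i => ∑ a : 𝒳 i, ∑ nf : Fin t → 𝒩 i,
      @ite ℝ (Gc i a nf ∧ S i (Fc i a nf)) (Classical.propDecidable _)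
        (rr i a * ∏ τ, prOf p (fun ω => N i τ.1 ω = nf τ)) 0 with hW
  -- the three conditional events
  have hfull : prOf p (fun ω => (∀ i, Xl i t ω = x i) ∧
      (∀ τ : Fin (t + 1), Xs τ.1 ω = xsv τ) ∧
      ∀ τ : Fin t, ∀ j, U j τ.1 ω = uv τ j) = C * ∏ i, W (fun i a => a = x i) i :=
    (prOf_congr p (hiff (fun i a => a = x i))).trans (Hmaster (fun i a => a = x i))
  have hhist : prOf p (fun ω => (∀ τ : Fin (t + 1), Xs τ.1 ω = xsv τ) ∧
      ∀ τ : Fin t, ∀ j, U j τ.1 ω = uv τ j) = C * ∏ i, W (fun _ _ => True) i := by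
    refine Eq.trans (prOf_congr p fun ω => ?_) ((prOf_congr p
      (hiff (fun _ _ => True))).trans (Hmaster (fun _ _ => True)))
    constructor
    · intro h; exact ⟨fun i => trivial, h⟩
    · intro h; exact h.2
  have hsing : ∀ i0, prOf p (fun ω => Xl i0 t ω = x i0 ∧
      (∀ τ : Fin (t + 1), Xs τ.1 ω = xsv τ) ∧
      ∀ τ : Fin t, ∀ j, U j τ.1 ω = uv τ j) =
      C * ∏ i, W (fun i a => i = i0 → a = x i) i := by
    intro i0
    refine Eq.trans (prOf_congr p fun ω => ?_) ((prOf_congr p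
      (hiff (fun i a => i = i0 → a = x i))).trans (Hmaster (fun i a => i = i0 → a = x i)))
    constructor
    · rintro ⟨h1, h2⟩
      exact ⟨fun i hi => by subst hi; exact h1, h2⟩
    · rintro ⟨h1, h2⟩
      exact ⟨h1 i0 rfl, h2⟩
  set G : Fin n → ℝ := W (fun i a => a = x i) with hG
  set H : Fin n → ℝ := W (fun _ _ => True) with hH
  -- single-controller product rearrangement
  have hWsing : ∀ i0, (∏ i, W (fun i a => i = i0 → a = x i) i)
      = G i0 * ∏ i ∈ Finset.univ.erase i0, H i := by
    intro i0
    have e1 : W (fun i a => i = i0 → a = x i) i0 = G i0 := by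
      rw [hG, hW]
      refine Finset.sum_congr rfl fun a _ => Finset.sum_congr rfl fun nf _ => ?_
      refine iteCongr ?_ _ _
      apply propext
      constructor
      · rintro ⟨h1, h2⟩; exact ⟨h1, h2 rfl⟩
      · rintro ⟨h1, h2⟩; exact ⟨h1, fun _ => h2⟩
    have e2 : ∀ i, i ≠ i0 → W (fun i a => i = i0 → a = x i) i = H i := by
      intro i hi
      rw [hH, hW]
      refine Finset.sum_congr rfl fun a _ => Finset.sum_congr rfl fun nf _ => ?_
      refine iteCongr ?_ _ _
      apply propext
      constructor
      · rintro ⟨h1, _⟩; exact ⟨h1, trivial⟩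
      · rintro ⟨h1, _⟩; exact ⟨h1, fun hh => absurd hh hi⟩
    rw [← Finset.mul_prod_erase Finset.univ _ (Finset.mem_univ i0), e1]
    congr 1
    refine Finset.prod_congr rfl fun i hi => ?_
    exact e2 i (Finset.ne_of_mem_erase hi)
  -- positivity bookkeeping
  have hWnonneg : ∀ S i, 0 ≤ W S i := by
    intro S i
    rw [hW]
    refine Finset.sum_nonneg fun a _ => Finset.sum_nonneg fun nf _ => ?_
    split
    · refine mul_nonneg ?_ (Finset.prod_nonneg fun τ _ => prOf_nonneg hp _)
      rw [hrr]
      exact div_nonneg (prOf_nonneg hp _) (prOf_nonneg hp _)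
    · exact le_rfl
  have hCnonneg : 0 ≤ C := by
    rw [hC]
    refine mul_nonneg hq0pos.le (Finset.sum_nonneg fun c _ => ?_)
    split
    · exact Finset.prod_nonneg fun τ _ => prOf_nonneg hp _
    · exact le_rfl
  have hpos' : 0 < C * ∏ i, H i := hhist ▸ hpos
  have hCH_ne : C ≠ 0 ∧ (∏ i, H i) ≠ 0 := mul_ne_zero_iff.mp hpos'.ne'
  have hCne : C ≠ 0 := hCH_ne.1
  have hHne : ∀ i, H i ≠ 0 := by
    intro i
    exact Finset.prod_ne_zero_iff.mp hCH_ne.2 i (Finset.mem_univ i)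
  -- final computation
  rw [hfull, hhist]
  have lhs_eq : C * (∏ i, G i) / (C * ∏ i, H i) = ∏ i, G i / H i := by
    rw [mul_div_mul_left _ _ hCne, ← Finset.prod_div_distrib]
  rw [lhs_eq]
  refine Finset.prod_congr rfl fun i0 _ => ?_
  rw [hsing i0, hWsing i0,
    ← Finset.mul_prod_erase Finset.univ H (Finset.mem_univ i0),
    mul_div_mul_left _ _ hCne,
    mul_div_mul_right _ _ (Finset.prod_ne_zero_iff.mpr fun j hj => hHne j)]
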